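/- Let $\Sigma$ be the normalized covariance matrix of a Gaussian tree $G = (V,E,W)$ on $N$ nodes, where $\sigma_{ii}=1$, $\sigma_{ij} = \prod_{e \in \mathrm{path}(i,j)} w_e$, and all $|w_e| < 1$. Then $\det\Sigma = \prod_{e_{ij}\in E}(1 - w_{ij}^2)$. -/

import Mathlib

open Matrix

namespace TreeDet

open SimpleGraph Walk

variable {V : Type} [Fintype V] [DecidableEq V]

lemma leaf_not_mem_support {G : SimpleGraph V} {v u : V}
    (hu : ∀ x, G.Adj v x → x = u) {a b : V} (ha : a ≠ v) (hb : b ≠ v)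
    (p : G.Walk a b) (hp : p.IsPath) : v ∉ p.support := by
  intro hv
  set q1 := p.takeUntil v hv with hq1def
  set q2 := p.dropUntil v hv with hq2def
  obtain ⟨x, hx, r, hr⟩ := Walk.exists_eq_cons_of_ne (Ne.symm ha) q1.reverse
  have hxu : x = u := hu x hx
  have hu1 : u ∈ q1.support := by
    have hx1 : x ∈ q1.reverse.support := by rw [hr]; simp
    rw [Walk.support_reverse, List.mem_reverse] at hx1
    rwa [hxu] at hx1
  obtain ⟨y, hy, r2, hr2⟩ := Walk.exists_eq_cons_of_ne (Ne.symm hb) q2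
  have hyu : y = u := hu y hy
  have hu2 : u ∈ q2.support.tail := by
    rw [hr2, Walk.support_cons]
    simp [← hyu]
  have hspec := p.take_spec hv
  have hnodup : (q1.append q2).support.Nodup := by
    rw [hspec]; exact hp.support_nodup
  rw [Walk.support_append] at hnodup
  exact (List.disjoint_of_nodup_append hnodup) hu1 hu2

lemma toComap {G : SimpleGraph V} (P : V → Prop) :
    ∀ {a b : V} (p : G.Walk a b) (h : ∀ x ∈ p.support, P x),
    Nonempty ((q : (G.comap (Subtype.val : {x // P x} → V)).Walk
        ⟨a, h a p.start_mem_support⟩ ⟨b, h b p.end_mem_support⟩)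
      ×' (q.edges.map (Sym2.map Subtype.val) = p.edges)) := by
  intro a b p
  induction p with
  | nil => exact fun h => ⟨Walk.nil, by simp⟩
  | @cons a c b hadj p ih =>
    intro h
    obtain ⟨q, hq⟩ := ih (fun x hx => h x (by simp [hx]))
    refine ⟨Walk.cons (by exact hadj) q, ?_⟩
    exact congrArg (List.cons s(a, c)) hq

theorem aux (n : ℕ) : ∀ (V : Type) [Fintype V] [DecidableEq V]
    (G : SimpleGraph V) [DecidableRel G.Adj], Fintype.card V = n → G.IsTree →
    ∀ (w : Sym2 V → ℝ) (S : Matrix V V ℝ),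
    (∀ i j, ∀ p : G.Walk i j, p.IsPath → S i j = (p.edges.map w).prod) →
    S.det = ∏ e ∈ G.edgeFinset, (1 - w e ^ 2) := by
  induction n with
  | zero =>
    intro V _ _ G _ hcard hT w S hS
    have := hT.isConnected.nonempty
    rw [Fintype.card_eq_zero_iff] at hcard
    exact (hcard.false this.some).elim
  | succ n ih =>
    intro V _ _ G _ hcard hT w S hS
    have hSdiag : ∀ i : V, S i i = 1 := fun i => by
      simpa using hS i i Walk.nil Walk.IsPath.nil
    rcases Nat.eq_zero_or_pos n with hn | hn
    · -- one vertex
      subst hn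
      obtain ⟨x, hx⟩ := Fintype.card_eq_one_iff.mp hcard
      haveI : Unique V := ⟨⟨x⟩, hx⟩
      have hE : G.edgeFinset = ∅ := by
        refine Finset.card_eq_zero.mp ?_
        have h1 := hT.card_edgeFinset
        rw [hcard] at h1
        omega
      rw [hE, Finset.prod_empty, Matrix.det_unique, hSdiag]
    · -- at least 2 vertices: find a leaf
      have hedges : G.edgeFinset.card = n := by
        have := hT.card_edgeFinset; omega
      have hdegpos : ∀ x : V, 0 < G.degree x := by
        intro x
        rw [G.degree_pos_iff_exists_adj]
        obtain ⟨y, hy⟩ := Fintype.exists_ne_of_one_lt_card (by omega) x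
        obtain ⟨p⟩ := hT.isConnected.preconnected x y
        obtain ⟨z, hz, _, _⟩ := Walk.exists_eq_cons_of_ne (Ne.symm hy) p
        exact ⟨z, hz⟩
      have hleafex : ∃ v : V, G.degree v = 1 := by
        by_contra hcon
        push_neg at hcon
        have h2 : ∀ x : V, 2 ≤ G.degree x := fun x => by
          have := hdegpos x; have := hcon x; omega
        have hsum := G.sum_degrees_eq_twice_card_edges
        have hge : 2 * (n + 1) ≤ ∑ x : V, G.degree x := by
          calc 2 * (n + 1) = ∑ _x : V, 2 := by
                rw [Finset.sum_const, Finset.card_univ, hcard, smul_eq_mul]; ring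
            _ ≤ ∑ x : V, G.degree x := Finset.sum_le_sum fun x _ => h2 x
        rw [hsum, hedges] at hge
        omega
      obtain ⟨v, hv⟩ := hleafex
      obtain ⟨u, huN⟩ := Finset.card_eq_one.mp hv
      have hu : ∀ x, G.Adj v x → x = u := by
        intro x hx
        have : x ∈ G.neighborFinset v := (G.mem_neighborFinset v x).mpr hx
        rw [huN] at this
        exact Finset.mem_singleton.mp this
      have hadj : G.Adj v u := by
        have : u ∈ G.neighborFinset v := by rw [huN]; exact Finset.mem_singleton_self u
        exact (G.mem_neighborFinset v u).mp this
      have hvu : v ≠ u := G.ne_of_adj hadj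
      set w₀ : ℝ := w s(v, u) with hw₀
      -- key entries
      have hSuv : S u v = w₀ := by
        have hP : (Walk.cons (G.adj_symm hadj) Walk.nil : G.Walk u v).IsPath := by
          simp [Walk.cons_isPath_iff, Ne.symm hvu]
        have := hS u v (Walk.cons (G.adj_symm hadj) Walk.nil) hP
        simpa [Sym2.eq_swap] using this
      have hSvj : ∀ j, j ≠ v → S v j = w₀ * S u j := by
        intro j hj
        obtain ⟨q, hq, -⟩ := hT.existsUnique_path u j
        have hvq : v ∉ q.support :=
          leaf_not_mem_support hu (Ne.symm hvu) hj q hq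
        have hP : (Walk.cons hadj q).IsPath := (Walk.cons_isPath_iff _ _).mpr ⟨hq, hvq⟩
        have h1 := hS v j (Walk.cons hadj q) hP
        have h2 := hS u j q hq
        rw [Walk.edges_cons, List.map_cons, List.prod_cons] at h1
        rw [h1, h2]
      -- row operation
      have hrow : (S v + (-w₀) • S u) = (1 - w₀ ^ 2) • (Pi.single v 1 : V → ℝ) := by
        funext j
        by_cases hj : j = v
        · subst hj
          simp only [Pi.add_apply, Pi.smul_apply, Pi.single_eq_same, smul_eq_mul,
            hSdiag, hSuv]
          ring
        · simp only [Pi.add_apply, Pi.smul_apply, Pi.single_eq_of_ne hj, smul_eq_mul,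
            hSvj j hj]
          ring
      have hdet1 : S.det = (1 - w₀ ^ 2) * (S.updateRow v (Pi.single v 1)).det := by
        rw [← Matrix.det_updateRow_smul, ← hrow, Matrix.det_updateRow_add_smul_self S hvu (-w₀)]
      set T := S.updateRow v (Pi.single v 1) with hTdef
      haveI : Unique {x // x = v} := ⟨⟨⟨v, rfl⟩⟩, by rintro ⟨_, rfl⟩; rfl⟩
      have hblock : T.submatrix (Equiv.sumCompl (· = v)) (Equiv.sumCompl (· = v)) =
          Matrix.fromBlocks 1 0 (Matrix.of fun i _ => T i.1 v)
            (S.submatrix (Subtype.val : {x // ¬ x = v} → V) Subtype.val) := by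
        ext i j
        cases i with
        | inl i =>
          cases j with
          | inl j =>
            have hij : i = j := Subtype.ext (i.2.trans j.2.symm)
            subst hij
            obtain ⟨i, rfl⟩ := i
            simp [hTdef]
          | inr j =>
            obtain ⟨i, rfl⟩ := i
            simp [hTdef, Pi.single_eq_of_ne j.2]
        | inr i =>
          cases j with
          | inl j =>
            obtain ⟨j, rfl⟩ := j
            simp
          | inr j =>
            simp [hTdef, Matrix.updateRow_ne i.2]
      have hdetT : T.det = (S.submatrix (Subtype.val : {x // ¬ x = v} → V) Subtype.val).det := by
        rw [← Matrix.det_submatrix_equiv_self (Equiv.sumCompl (· = v)) T, hblock,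
          Matrix.det_fromBlocks_zero₁₂, Matrix.det_one, one_mul]
      -- apply the induction hypothesis on the induced graph
      set G' := G.comap (Subtype.val : {x // ¬ x = v} → V) with hG'def
      haveI hdec' : DecidableRel G'.Adj := fun a b => by
        simp only [hG'def, SimpleGraph.comap_adj]; infer_instance
      have hcard' : Fintype.card {x // ¬ x = v} = n := by
        have h1 : Fintype.card {x // ¬ x = v} = Fintype.card V - Fintype.card {x // x = v} :=
          Fintype.card_subtype_compl _
        rw [h1, Fintype.card_subtype_eq, hcard]
        omega
      have hsupmem : ∀ {a b : V} (p : G.Walk a b), v ∉ p.support →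
          ∀ x ∈ p.support, ¬ x = v := by
        intro a b p hp x hx
        rintro rfl; exact hp hx
      let fHom : G' →g G := ⟨Subtype.val, fun h => h⟩
      have finj : Function.Injective (fHom : {x // ¬ x = v} → V) := Subtype.val_injective
      have hT'tree : G'.IsTree := by
        haveI : Nonempty {x // ¬ x = v} := ⟨⟨u, Ne.symm hvu⟩⟩
        refine ⟨⟨?_⟩, ?_⟩
        · intro a b
          obtain ⟨p, hp, -⟩ := hT.existsUnique_path a.1 b.1
          have hvp : v ∉ p.support := leaf_not_mem_support hu a.2 b.2 p hp
          obtain ⟨q, -⟩ := toComap (fun x => ¬ x = v) p (hsupmem p hvp)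
          exact q.reachable
        · intro c q hq
          have : (q.map fHom).IsCycle :=
            (Walk.map_isCycle_iff_of_injective finj).mpr hq
          exact hT.IsAcyclic _ this
      have hS' : ∀ i j : {x // ¬ x = v}, ∀ p : G'.Walk i j, p.IsPath →
          (S.submatrix (Subtype.val : {x // ¬ x = v} → V) Subtype.val) i j
            = (p.edges.map (fun e => w (Sym2.map Subtype.val e))).prod := by
        intro i j p hp
        have h1 := hS i.1 j.1 (p.map fHom) (Walk.map_isPath_of_injective finj hp)
        rw [Walk.edges_map, List.map_map] at h1
        exact h1
      have hIH := ih {x // ¬ x = v} G' hcard' hT'tree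
        (fun e => w (Sym2.map Subtype.val e))
        (S.submatrix (Subtype.val : {x // ¬ x = v} → V) Subtype.val) hS'
      -- edge set decomposition
      have hmapinj : Function.Injective (Sym2.map (Subtype.val : {x // ¬ x = v} → V)) :=
        Sym2.map.injective Subtype.val_injective
      have hEdge : G.edgeFinset
          = insert s(v, u) (G'.edgeFinset.image (Sym2.map Subtype.val)) := by
        ext e
        induction e using Sym2.ind with
        | _ a b =>
          simp only [SimpleGraph.mem_edgeFinset, SimpleGraph.mem_edgeSet,
            Finset.mem_insert, Finset.mem_image]
          constructor
          · intro hab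
            by_cases hav : a = v
            · subst hav
              left; rw [hu b hab]
            · by_cases hbv : b = v
              · subst hbv
                left
                rw [hu a (G.adj_symm hab), Sym2.eq_swap]
              · right
                refine ⟨s(⟨a, hav⟩, ⟨b, hbv⟩), ?_, ?_⟩
                · rw [SimpleGraph.mem_edgeSet]
                  exact hab
                · rfl
          · rintro (he | ⟨e', he', heq⟩)
            · rw [Sym2.eq_iff] at he
              rcases he with ⟨rfl, rfl⟩ | ⟨rfl, rfl⟩
              · exact hadj
              · exact G.adj_symm hadj
            · revert he' heq
              induction e' using Sym2.ind with
              | _ x y =>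
                intro he' heq
                have hxy : G.Adj x.1 y.1 := by
                  rw [SimpleGraph.mem_edgeSet] at he'
                  exact he'
                rw [Sym2.map_pair_eq] at heq
                rw [← SimpleGraph.mem_edgeSet, ← heq, SimpleGraph.mem_edgeSet]
                exact hxy
      have hnotmem : s(v, u) ∉ G'.edgeFinset.image (Sym2.map Subtype.val) := by
        rw [Finset.mem_image]
        rintro ⟨e', -, he⟩
        revert he
        induction e' using Sym2.ind with
        | _ x y =>
          intro he
          rw [Sym2.map_pair_eq, Sym2.eq_iff] at he
          rcases he with ⟨h1, -⟩ | ⟨-, h2⟩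
          · exact x.2 h1
          · exact y.2 h2
      have himg : ∏ e ∈ (G'.edgeFinset.image (Sym2.map Subtype.val)), (1 - w e ^ 2)
          = ∏ e ∈ G'.edgeFinset, (1 - w (Sym2.map Subtype.val e) ^ 2) :=
        Finset.prod_image (fun x _ y _ h => hmapinj h)
      rw [hEdge, Finset.prod_insert hnotmem, himg]
      rw [hdet1]
      rw [hdetT]
      rw [hIH]

end TreeDet

theorem stmt13 {N : ℕ} (G : SimpleGraph (Fin N)) [DecidableRel G.Adj]
    (hT : G.IsTree) (w : Sym2 (Fin N) → ℝ)
    (hw : ∀ e ∈ G.edgeFinset, |w e| < 1)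
    (S : Matrix (Fin N) (Fin N) ℝ)
    (hS : ∀ i j : Fin N, ∀ p : G.Walk i j, p.IsPath → S i j = (p.edges.map w).prod) :
    S.det = ∏ e ∈ G.edgeFinset, (1 - (w e) ^ 2) := by
  exact TreeDet.aux N (Fin N) G (Fintype.card_fin N) hT w S hS
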